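/- An n×n real symmetric matrix A satisfies tr(A^{2k+1}) = 0 for all 0 ≤ k ≤ ⌊(n-1)/2⌋ if and only if its nonzero eigenvalues occur in oppositely signed pairs (with multiplicity). -/

import Mathlib

open Finset Polynomial

/-- The multiset of eigenvalues (with multiplicity) of a real symmetric
(Hermitian) matrix. -/
noncomputable def eigMultiset {n : ℕ} {A : Matrix (Fin n) (Fin n) ℝ}
    (hA : A.IsHermitian) : Multiset ℝ :=
  Finset.univ.val.map hA.eigenvalues

/-- The nonzero eigenvalues of `A` occur in oppositely signed pairs (with
multiplicity): the multiset of nonzero eigenvalues is invariant under negation. -/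
noncomputable def IsAustereSpectrum {n : ℕ} {A : Matrix (Fin n) (Fin n) ℝ}
    (hA : A.IsHermitian) : Prop :=
  ((eigMultiset hA).filter (· ≠ 0)).map (fun t => -t)
    = (eigMultiset hA).filter (· ≠ 0)

lemma my_trace_pow {n : ℕ} {A : Matrix (Fin n) (Fin n) ℝ} (hA : A.IsHermitian) (m : ℕ) :
    (A ^ m).trace = ∑ i, hA.eigenvalues i ^ m := by
  set U : Matrix (Fin n) (Fin n) ℝ := (hA.eigenvectorUnitary : Matrix (Fin n) (Fin n) ℝ)
  set D : Matrix (Fin n) (Fin n) ℝ := Matrix.diagonal (RCLike.ofReal ∘ hA.eigenvalues)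
  have hsU : star U * U = 1 := Unitary.coe_star_mul_self hA.eigenvectorUnitary
  have hUs : U * star U = 1 := Unitary.coe_mul_star_self hA.eigenvectorUnitary
  have key : ∀ m : ℕ, A ^ m = U * D ^ m * star U := by
    intro m
    induction m with
    | zero => simp [hUs]
    | succ k ih =>
        rw [pow_succ, ih, hA.spectral_theorem, pow_succ]
        calc U * D ^ k * star U * (U * D * star U)
            = U * D ^ k * (star U * U) * D * star U := by noncomm_ring
          _ = U * (D ^ k * D) * star U := by rw [hsU]; noncomm_ring
  rw [key, Matrix.trace_mul_cycle, hsU, Matrix.one_mul]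
  simp [D, Matrix.diagonal_pow, Matrix.trace_diagonal, RCLike.ofReal_real_eq_id]

lemma my_aeval_psum {n : ℕ} (f : Fin n → ℝ) (k : ℕ) :
    MvPolynomial.aeval f (MvPolynomial.psum (Fin n) ℝ k) = ∑ i, f i ^ k := by
  simp [MvPolynomial.psum]

lemma my_newton {n : ℕ} (f : Fin n → ℝ) (k : ℕ) :
    (k : ℝ) * (Finset.univ.val.map f).esymm k = (-1) ^ (k + 1) *
      ∑ a ∈ (Finset.HasAntidiagonal.antidiagonal k).filter (fun a => a.1 < k),
        (-1 : ℝ) ^ a.1 * (Finset.univ.val.map f).esymm a.1 * (∑ i, f i ^ a.2) := by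
  have h := congrArg (MvPolynomial.aeval f) (MvPolynomial.mul_esymm_eq_sum (Fin n) ℝ k)
  simpa [map_mul, map_sum, map_pow, map_natCast,
    MvPolynomial.aeval_esymm_eq_multiset_esymm, my_aeval_psum] using h

lemma my_esymm_odd {n : ℕ} (f : Fin n → ℝ)
    (hp : ∀ m, Odd m → m ≤ n → ∑ i, f i ^ m = 0) :
    ∀ m, Odd m → m ≤ n → (Finset.univ.val.map f).esymm m = 0 := by
  intro m
  induction m using Nat.strong_induction_on with
  | _ m ih =>
    intro hodd hle
    have h := my_newton f m
    have hsum : ∑ a ∈ (Finset.HasAntidiagonal.antidiagonal m).filter (fun a => a.1 < m),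
        (-1 : ℝ) ^ a.1 * (Finset.univ.val.map f).esymm a.1 * (∑ i, f i ^ a.2) = 0 := by
      refine Finset.sum_eq_zero fun a ha => ?_
      rw [Finset.mem_filter, Finset.HasAntidiagonal.mem_antidiagonal] at ha
      rcases Nat.even_or_odd a.2 with he | ho
      · have hodd1 : Odd a.1 := by
          rcases hodd with ⟨c, hc⟩; rcases he with ⟨d, hd⟩
          exact ⟨c - d, by omega⟩
        rw [ih a.1 ha.2 hodd1 (le_trans (le_of_lt ha.2) hle), mul_zero, zero_mul]
      · rw [hp a.2 ho (by omega), mul_zero]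
    rw [hsum, mul_zero] at h
    have hm : (m : ℝ) ≠ 0 := Nat.cast_ne_zero.mpr (by rcases hodd with ⟨c, hc⟩; omega)
    exact (mul_eq_zero.mp h).resolve_left hm

lemma my_map_neg {n : ℕ} (f : Fin n → ℝ)
    (he : ∀ m, Odd m → m ≤ n → (Finset.univ.val.map f).esymm m = 0) :
    (Finset.univ.val.map f).map (fun t => -t) = Finset.univ.val.map f := by
  set M : Multiset ℝ := Finset.univ.val.map f with hM
  have hcard : Multiset.card M = n := by simp [hM]
  have hMn : M.map (fun t => -t) = M.map Neg.neg := rfl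
  have key : ((M.map (fun t => -t)).map fun t => X - C t).prod
      = (M.map fun t => X - C t).prod := by
    rw [Multiset.prod_X_sub_X_eq_sum_esymm, Multiset.prod_X_sub_X_eq_sum_esymm,
      Multiset.card_map, hcard]
    refine Finset.sum_congr rfl fun j hj => ?_
    rw [Finset.mem_range] at hj
    rw [hMn, Multiset.esymm_neg]
    rcases Nat.even_or_odd j with hev | hod
    · simp [hev.neg_one_pow]
    · rw [he j hod (by omega)]; simp
  have := congrArg Polynomial.roots key
  rwa [Polynomial.roots_multiset_prod_X_sub_C, Polynomial.roots_multiset_prod_X_sub_C] at this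

theorem austere_iff_trace_odd_pow {n : ℕ} (A : Matrix (Fin n) (Fin n) ℝ)
    (hA : A.IsHermitian) :
    (∀ k : ℕ, k ≤ (n - 1) / 2 → (A ^ (2 * k + 1)).trace = 0)
      ↔ IsAustereSpectrum hA := by
  constructor
  · intro htr
    have hp : ∀ m, Odd m → m ≤ n → ∑ i, hA.eigenvalues i ^ m = 0 := by
      rintro m ⟨c, rfl⟩ hle
      have hc : c ≤ (n - 1) / 2 := by omega
      have h := htr c hc
      rwa [my_trace_pow hA] at h
    have hmap := my_map_neg hA.eigenvalues (my_esymm_odd hA.eigenvalues hp)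
    unfold IsAustereSpectrum eigMultiset
    set M : Multiset ℝ := Finset.univ.val.map hA.eigenvalues with hMdef
    have h2 : (M.map (fun t => -t)).filter (· ≠ 0) = M.filter (· ≠ 0) := by rw [hmap]
    rw [Multiset.filter_map] at h2
    have h3 : M.filter ((· ≠ 0) ∘ (fun t : ℝ => -t)) = M.filter (· ≠ 0) :=
      Multiset.filter_congr fun x _ => by simp
    rw [h3] at h2
    exact h2
  · intro h k _
    rw [my_trace_pow hA]
    have hodd : Odd (2 * k + 1) := ⟨k, rfl⟩
    set M : Multiset ℝ := Finset.univ.val.map hA.eigenvalues with hMdef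
    have hs : ∑ i, hA.eigenvalues i ^ (2 * k + 1)
        = (M.map (fun t => t ^ (2 * k + 1))).sum := by
      rw [hMdef, Multiset.map_map]; rfl
    rw [hs]
    have hsplit := Multiset.filter_add_not (· ≠ 0) M
    conv_lhs => rw [← hsplit]
    rw [Multiset.map_add, Multiset.sum_add]
    have h1 : ((M.filter (fun a : ℝ => ¬ a ≠ 0)).map (fun t => t ^ (2 * k + 1))).sum = 0 := by
      apply Multiset.sum_eq_zero
      intro x hx
      obtain ⟨y, hy, rfl⟩ := Multiset.mem_map.mp hx
      have hy0 : y = 0 := by simpa using Multiset.of_mem_filter hy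
      simp [hy0]
    have h2 : ((M.filter (· ≠ 0)).map (fun t => t ^ (2 * k + 1))).sum = 0 := by
      have hF : (M.filter (· ≠ 0)).map (fun t => -t) = M.filter (· ≠ 0) := h
      set F : Multiset ℝ := M.filter (· ≠ 0) with hFdef
      have hnegsum : (F.map (fun t => t ^ (2 * k + 1))).sum
          = -(F.map (fun t => t ^ (2 * k + 1))).sum := by
        conv_lhs => rw [← hF]
        rw [Multiset.map_map]
        have hcomp : ((fun t : ℝ => t ^ (2 * k + 1)) ∘ (fun t => -t))
            = fun t : ℝ => -(t ^ (2 * k + 1)) := funext fun t => by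
          simp [Function.comp, hodd.neg_pow]
        have hmm : F.map (fun t : ℝ => -(t ^ (2 * k + 1)))
            = (F.map (fun t : ℝ => t ^ (2 * k + 1))).map Neg.neg := by
          rw [Multiset.map_map]; rfl
        rw [hcomp, hmm, Multiset.sum_map_neg']
      linarith
    rw [h1, h2, add_zero]
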